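/- Let $X$ be a Banach space and $J$ a closed subspace. If $J$ is an HB-subspace of $X$ (there is a projection $\mathcal{Q}$ on $X^*$ with kernel $J^\perp$ such that $\|\mathcal{Q}f\|<\|f\|$ and $\|f-\mathcal{Q}f\|\le\|f\|$ whenever $f\ne\mathcal{Q}f$), then every $g\in J^*$ has a unique norm-preserving extension to $X^*$ (i.e. $J$ is HB-smooth in $X$). -/
import Mathlib

theorem stmt15 {X : Type*} [NormedAddCommGroup X] [NormedSpace ℝ X] [CompleteSpace X]
    (J : Submodule ℝ X) (hJc : IsClosed (J : Set X))
    (Q : (X →L[ℝ] ℝ) →L[ℝ] (X →L[ℝ] ℝ))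
    (hproj : ∀ f, Q (Q f) = Q f)
    (hker : ∀ f, Q f = 0 ↔ ∀ y ∈ J, f y = 0)
    (hHB : ∀ f : X →L[ℝ] ℝ, f ≠ Q f → ‖Q f‖ < ‖f‖ ∧ ‖f - Q f‖ ≤ ‖f‖) :
    ∀ g : ↥J →L[ℝ] ℝ, ∃! f : X →L[ℝ] ℝ, f.comp J.subtypeL = g ∧ ‖f‖ = ‖g‖ := by
  intro g
  -- any extension has norm ≥ ‖g‖
  have hge : ∀ f : X →L[ℝ] ℝ, f.comp J.subtypeL = g → ‖g‖ ≤ ‖f‖ := by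
    intro f hf
    rw [← hf]
    refine ContinuousLinearMap.opNorm_le_bound _ (norm_nonneg f) ?_
    intro x
    calc ‖(f.comp J.subtypeL) x‖ = ‖f (x : X)‖ := rfl
      _ ≤ ‖f‖ * ‖(x : X)‖ := f.le_opNorm _
      _ = ‖f‖ * ‖x‖ := rfl
  -- Q f extends g whenever f does
  have hQext : ∀ f : X →L[ℝ] ℝ, f.comp J.subtypeL = g → (Q f).comp J.subtypeL = g := by
    intro f hf
    have h0 : Q (f - Q f) = 0 := by
      rw [map_sub, hproj, sub_self]
    have hann := (hker _).mp h0
    ext x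
    have := hann x x.2
    simp only [ContinuousLinearMap.sub_apply] at this
    have : Q f (x : X) = f (x : X) := by linarith
    rw [← hf]
    simpa using this
  -- any norm-preserving extension f equals Q f
  have hfix : ∀ f : X →L[ℝ] ℝ, f.comp J.subtypeL = g → ‖f‖ = ‖g‖ → f = Q f := by
    intro f hf hn
    by_contra hne
    have h1 := (hHB f hne).1
    have h2 := hge (Q f) (hQext f hf)
    rw [← hn] at h2
    linarith
  -- existence via Hahn-Banach
  obtain ⟨h, hh1, hh2⟩ := exists_extension_norm_eq J g
  have hhext : h.comp J.subtypeL = g := by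
    ext x; exact hh1 x
  have hQh : (Q h).comp J.subtypeL = g := hQext h hhext
  have hQle : ‖Q h‖ ≤ ‖h‖ := by
    by_cases hc : h = Q h
    · rw [← hc]
    · exact le_of_lt (hHB h hc).1
  have hQnorm : ‖Q h‖ = ‖g‖ := le_antisymm (hQle.trans hh2.le) (hge _ hQh)
  refine ⟨Q h, ⟨hQh, hQnorm⟩, ?_⟩
  intro f ⟨hf1, hf2⟩
  have hfQ : f = Q f := hfix f hf1 hf2
  -- f - Q h annihilates J, so Q (f - Q h) = 0, i.e. Q f = Q (Q h) = Q h
  have hann : Q (f - Q h) = 0 := by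
    apply (hker _).mpr
    intro y hy
    have h1 : f y = g ⟨y, hy⟩ := by rw [← hf1]; rfl
    have h2 : Q h y = g ⟨y, hy⟩ := by rw [← hQh]; rfl
    simp [h1, h2]
  rw [map_sub, hproj, sub_eq_zero] at hann
  rw [hfQ, hann]
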